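/- Let $S$ be a set of exactly $d$ vertices in the graph of the $d$-cube (the hypercube graph $Q_d$ on $\{0,1\}^d$) such that removing $S$ disconnects the graph. Then $S$ is an independent set: no two vertices of $S$ are adjacent in $Q_d$. -/

import Mathlib

open SimpleGraph Finset Function

/-- The hypercube graph `Q d` on `{0,1}^d`: two vertices are adjacent iff they differ in
exactly one coordinate. -/
def Q (d : ℕ) : SimpleGraph (Fin d → Bool) where
  Adj x y := hammingDist x y = 1
  symm := ⟨fun x y h => by simpa [hammingDist_comm] using h⟩
  loopless := ⟨fun x h => by simp [hammingDist_self] at h⟩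


lemma adj_update {d : ℕ} (x : Fin d → Bool) (i : Fin d) (b : Bool) (hb : b ≠ x i) :
    (Q d).Adj x (Function.update x i b) := by
  show hammingDist _ _ = 1
  rw [hammingDist, show ({j | x j ≠ Function.update x i b j} : Finset (Fin d)) = {i} by
    ext k
    by_cases hk : k = i <;> simp [hk, Function.update_of_ne, Ne.symm hb]]
  simp

lemma adj_iff {d : ℕ} {u v : Fin d → Bool} (h : (Q d).Adj u v) :
    ∃ i, u i ≠ v i ∧ v = Function.update u i (v i) := by
  have h' : ({j | u j ≠ v j} : Finset (Fin d)).card = 1 := h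
  obtain ⟨i, hi⟩ := Finset.card_eq_one.1 h'
  refine ⟨i, ?_, ?_⟩
  · have : i ∈ ({j | u j ≠ v j} : Finset (Fin d)) := hi ▸ Finset.mem_singleton_self i
    simpa using this
  · funext k
    by_cases hk : k = i
    · subst hk; simp
    · rw [Function.update_of_ne hk]
      by_contra hne
      have : k ∈ ({j | u j ≠ v j} : Finset (Fin d)) := by simpa using Ne.symm hne
      rw [hi, Finset.mem_singleton] at this
      exact hk this

lemma exists_cube_walk {d : ℕ} : ∀ (n : ℕ) (x y : Fin d → Bool), hammingDist x y = n →
    ∃ p : (Q d).Walk x y, ∀ z ∈ p.support, ∀ k, z k = x k ∨ z k = y k := by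
  intro n
  induction n with
  | zero =>
    intro x y h
    obtain rfl := eq_of_hammingDist_eq_zero h
    exact ⟨SimpleGraph.Walk.nil, by simp +contextual⟩
  | succ m ih =>
    intro x y h
    have hne : ({j | x j ≠ y j} : Finset (Fin d)).Nonempty := by
      rw [← Finset.card_pos, ← hammingDist, h]; omega
    obtain ⟨i, hi⟩ := hne
    have hixy : x i ≠ y i := by simpa using hi
    set x' := Function.update x i (y i) with hx'
    have hdist : hammingDist x' y = m := by
      have : ({j | x' j ≠ y j} : Finset (Fin d)) = ({j | x j ≠ y j} : Finset (Fin d)).erase i := by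
        ext k
        by_cases hk : k = i <;> simp [hk, hx', Function.update_of_ne]
      rw [hammingDist, this, Finset.card_erase_of_mem hi, ← hammingDist, h]; omega
    obtain ⟨p, hp⟩ := ih x' y hdist
    refine ⟨SimpleGraph.Walk.cons (adj_update x i (y i) (Ne.symm hixy)) p, ?_⟩
    intro z hz
    rw [SimpleGraph.Walk.support_cons, List.mem_cons] at hz
    rcases hz with rfl | hz
    · intro k; exact Or.inl rfl
    · intro k
      rcases hp z hz k with h1 | h2
      · by_cases hk : k = i
        · subst hk; rw [h1]; simp [hx']
        · rw [h1, hx', Function.update_of_ne hk]; exact Or.inl rfl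
      · exact Or.inr h2

/-- number of points in a subcube -/

lemma card_subcube {d : ℕ} (F : Finset (Fin d)) (x : Fin d → Bool) :
    (Finset.univ.filter (fun z : Fin d → Bool => ∀ k ∉ F, z k = x k)).card = 2 ^ F.card := by
  classical
  rw [show (2 : ℕ) ^ F.card = Fintype.card (F → Bool) by simp [Fintype.card_fun],
    ← Finset.card_univ]
  apply Finset.card_bij' (fun z _ => fun j : F => z j.1)
    (fun g _ => fun k => if h : k ∈ F then g ⟨k, h⟩ else x k)
  · intro z _; exact Finset.mem_univ _
  · intro g _
    simp only [Finset.mem_filter, Finset.mem_univ, true_and]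
    intro k hk
    simp [hk]
  · intro z hz
    simp only [Finset.mem_filter, Finset.mem_univ, true_and] at hz
    funext k
    by_cases h : k ∈ F <;> simp [h, hz k]
  · intro g _
    funext j
    simp

lemma subcube_conn {d : ℕ} (T : Finset (Fin d → Bool)) :
    ∀ (n : ℕ) (F : Finset (Fin d)), F.card = n →
    ∀ x y : Fin d → Bool, (∀ k ∉ F, y k = x k) →
    (T.filter fun t => ∀ k ∉ F, t k = x k).card < F.card →
    x ∉ T → y ∉ T →
    ∃ p : (Q d).Walk x y, ∀ z ∈ p.support, z ∉ T ∧ ∀ k ∉ F, z k = x k := by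
  intro n
  induction n with
  | zero =>
    intro F hF x y _ hT _ _
    rw [hF] at hT
    exact absurd hT (Nat.not_lt_zero _)
  | succ m ih =>
    intro F hF x y hxy hT hx hy
    set T' := T.filter (fun t => ∀ k ∉ F, t k = x k) with hT'def
    have hT'card : T'.card < m + 1 := by rw [hT'def, ← hF]; exact hT
    by_cases hTe : T' = ∅
    · -- no obstacles in the subcube: direct cube walk
      obtain ⟨p, hp⟩ := exists_cube_walk (hammingDist x y) x y rfl
      refine ⟨p, fun z hz => ⟨?_, ?_⟩⟩
      · intro hzT
        have : z ∈ T' := by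
          rw [hT'def, Finset.mem_filter]
          exact ⟨hzT, fun k hk => (hp z hz k).elim id (fun h => h.trans (hxy k hk))⟩
        simp [hTe] at this
      · intro k hk
        exact (hp z hz k).elim id (fun h => h.trans (hxy k hk))
    · have hT'ne : T'.Nonempty := Finset.nonempty_iff_ne_empty.2 hTe
      have hT'le : T'.card ≤ m := Nat.lt_succ_iff.mp hT'card
      have hm1 : 1 ≤ m := le_trans (Finset.card_pos.2 hT'ne) hT'le
      by_cases hsplit : ∃ i ∈ F, ∃ t1 ∈ T', ∃ t2 ∈ T', t1 i ≠ t2 i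
      · obtain ⟨i, hiF, t1, ht1, t2, ht2, h12⟩ := hsplit
        set F' := F.erase i with hF'def
        have hF' : F'.card = m := by rw [hF'def, Finset.card_erase_of_mem hiF, hF]; rfl
        have hsubF : ∀ k, k ∉ F → k ∉ F' := fun k hk hk' => hk (Finset.mem_of_mem_erase hk')
        have hiF' : i ∉ F' := Finset.notMem_erase i F
        -- bound on obstacle count in any half, relative to base point w
        have hbnd : ∀ w : Fin d → Bool, (∀ k ∉ F, w k = x k) → (∃ t ∈ T', t i ≠ w i) →
            (T.filter fun t => ∀ k ∉ F', t k = w k).card < F'.card := by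
          intro w hw ⟨ts, hts, htsw⟩
          have hss : (T.filter fun t => ∀ k ∉ F', t k = w k) ⊂ T' := by
            rw [Finset.ssubset_iff_of_subset]
            · exact ⟨ts, hts, fun hmem => htsw ((Finset.mem_filter.1 hmem).2 i hiF')⟩
            · intro t ht
              rw [Finset.mem_filter] at ht ⊢
              exact ⟨ht.1, fun k hk => (ht.2 k (hsubF k hk)).trans (hw k hk)⟩
          rw [hF']
          exact lt_of_lt_of_le (Finset.card_lt_card hss) hT'le
        have hwx : ∃ t ∈ T', t i ≠ x i := by
          rcases eq_or_ne (t1 i) (x i) with h | h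
          · exact ⟨t2, ht2, by rw [← h]; exact fun hh => h12 hh.symm⟩
          · exact ⟨t1, ht1, h⟩
        have hbx := hbnd x (fun k _ => rfl) hwx
        by_cases hxyi : y i = x i
        · -- same half
          obtain ⟨p, hp⟩ := ih F' hF' x y
            (fun k hk => by
              by_cases hki : k = i
              · subst hki; exact hxyi
              · exact hxy k (fun hkF => hk (Finset.mem_erase.2 ⟨hki, hkF⟩)))
            hbx hx hy
          exact ⟨p, fun z hz => ⟨(hp z hz).1, fun k hk => (hp z hz).2 k (hsubF k hk)⟩⟩
        · -- different halves: find a free crossing edge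
          have hwy : ∃ t ∈ T', t i ≠ y i := by
            rcases eq_or_ne (t1 i) (y i) with h | h
            · exact ⟨t2, ht2, by rw [← h]; exact fun hh => h12 hh.symm⟩
            · exact ⟨t1, ht1, h⟩
          have hby := hbnd y hxy hwy
          set U := Finset.univ.filter (fun z : Fin d → Bool => ∀ k ∉ F', z k = x k) with hUdef
          set B := T'.image (fun t => Function.update t i (x i)) with hBdef
          have hBU : B.card < U.card := by
            rw [hUdef, card_subcube, hF']
            calc B.card ≤ T'.card := Finset.card_image_le
            _ ≤ m := hT'le
            _ < 2 ^ m := Nat.lt_two_pow_self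
          obtain ⟨z, hzU, hzB⟩ := Finset.not_subset.1
            (fun h => absurd (Finset.card_le_card h) (not_le.2 hBU))
          have hzx : ∀ k ∉ F', z k = x k := (Finset.mem_filter.1 hzU).2
          have hzi : z i = x i := hzx i hiF'
          have hmemT' : ∀ w : Fin d → Bool, w ∈ T → (∀ k ∉ F, w k = x k) → w ∈ T' := by
            intro w hw hw2
            rw [hT'def, Finset.mem_filter]; exact ⟨hw, hw2⟩
          have hzT : z ∉ T := by
            intro hzT
            apply hzB
            rw [hBdef, Finset.mem_image]
            exact ⟨z, hmemT' z hzT (fun k hk => hzx k (hsubF k hk)),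
              by rw [← hzi, Function.update_eq_self]⟩
          set z' := Function.update z i (y i) with hz'def
          have hz'x : ∀ k, k ≠ i → z' k = z k := fun k hk => Function.update_of_ne hk _ _
          have hz'T : z' ∉ T := by
            intro hz'T
            apply hzB
            rw [hBdef, Finset.mem_image]
            refine ⟨z', hmemT' z' hz'T (fun k hk => ?_), ?_⟩
            · rw [hz'x k (fun h => hk (h ▸ hiF)), ]
              exact hzx k (hsubF k hk)
            · rw [hz'def, Function.update_idem, ← hzi, Function.update_eq_self]
          have hadj : (Q d).Adj z z' := adj_update z i (y i) (by rw [hzi]; exact fun h => hxyi h)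
          obtain ⟨p1, hp1⟩ := ih F' hF' x z hzx hbx hx hzT
          have hz'y : ∀ k ∉ F', y k = z' k := by
            intro k hk
            by_cases hki : k = i
            · subst hki; rw [hz'def, Function.update_self]
            · rw [hz'x k hki, hzx k hk]
              exact hxy k (fun hkF => hk (Finset.mem_erase.2 ⟨hki, hkF⟩))
          have hbz' : (T.filter fun t => ∀ k ∉ F', t k = z' k).card < F'.card := by
            have : (T.filter fun t => ∀ k ∉ F', t k = z' k)
                = (T.filter fun t => ∀ k ∉ F', t k = y k) := by
              apply Finset.filter_congr
              intro t _
              constructor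
              · intro h k hk; rw [h k hk, ← hz'y k hk]
              · intro h k hk; rw [h k hk, hz'y k hk]
            rw [this]; exact hby
          obtain ⟨p2, hp2⟩ := ih F' hF' z' y hz'y hbz' hz'T hy
          refine ⟨p1.append (SimpleGraph.Walk.cons hadj p2), fun w hw => ?_⟩
          rw [SimpleGraph.Walk.mem_support_append_iff] at hw
          rcases hw with hw | hw
          · exact ⟨(hp1 w hw).1, fun k hk => (hp1 w hw).2 k (hsubF k hk)⟩
          · rw [SimpleGraph.Walk.support_cons, List.mem_cons] at hw
            rcases hw with rfl | hw
            · exact ⟨hzT, fun k hk => hzx k (hsubF k hk)⟩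
            · refine ⟨(hp2 w hw).1, fun k hk => ?_⟩
              have hki : k ≠ i := fun h => hk (h ▸ hiF)
              rw [(hp2 w hw).2 k (hsubF k hk), hz'x k hki]
              exact hzx k (hsubF k hk)
      · -- all obstacles identical: T' is a singleton
        push_neg at hsplit
        obtain ⟨t₀, ht₀⟩ := hT'ne
        have hT's : ∀ t ∈ T', t = t₀ := by
          intro t ht
          funext k
          by_cases hk : k ∈ F
          · exact hsplit k hk t ht t₀ ht₀
          · rw [(Finset.mem_filter.1 ht).2 k hk, (Finset.mem_filter.1 ht₀).2 k hk]
        have ht₀x : ∃ i ∈ F, t₀ i ≠ x i := by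
          by_contra hcon
          push_neg at hcon
          apply hx
          have : t₀ = x := by
            funext k
            by_cases hk : k ∈ F
            · exact hcon k hk
            · exact (Finset.mem_filter.1 ht₀).2 k hk
          rw [← this]; exact Finset.mem_of_mem_filter t₀ ht₀
        obtain ⟨i, hiF, hti⟩ := ht₀x
        set F' := F.erase i with hF'def
        have hF' : F'.card = m := by rw [hF'def, Finset.card_erase_of_mem hiF, hF]; rfl
        have hsubF : ∀ k, k ∉ F → k ∉ F' := fun k hk hk' => hk (Finset.mem_of_mem_erase hk')
        have hiF' : i ∉ F' := Finset.notMem_erase i F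
        have hemp : (T.filter fun t => ∀ k ∉ F', t k = x k) = ∅ := by
          rw [Finset.eq_empty_iff_forall_notMem]
          intro t ht
          rw [Finset.mem_filter] at ht
          have htT' : t ∈ T' := by
            rw [hT'def, Finset.mem_filter]
            exact ⟨ht.1, fun k hk => ht.2 k (hsubF k hk)⟩
          have := hT's t htT'
          subst this
          exact hti (ht.2 i hiF')
        have hbx : (T.filter fun t => ∀ k ∉ F', t k = x k).card < F'.card := by
          rw [hemp, hF']; simp; omega
        by_cases hxyi : y i = x i
        · obtain ⟨p, hp⟩ := ih F' hF' x y
            (fun k hk => by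
              by_cases hki : k = i
              · subst hki; exact hxyi
              · exact hxy k (fun hkF => hk (Finset.mem_erase.2 ⟨hki, hkF⟩)))
            hbx hx hy
          exact ⟨p, fun z hz => ⟨(hp z hz).1, fun k hk => (hp z hz).2 k (hsubF k hk)⟩⟩
        · set y' := Function.update y i (x i) with hy'def
          have hy'k : ∀ k, k ≠ i → y' k = y k := fun k hk => Function.update_of_ne hk _ _
          have hy'x : ∀ k ∉ F', y' k = x k := by
            intro k hk
            by_cases hki : k = i
            · subst hki; rw [hy'def, Function.update_self]
            · rw [hy'k k hki]
              exact hxy k (fun hkF => hk (Finset.mem_erase.2 ⟨hki, hkF⟩))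
          have hy'T : y' ∉ T := by
            intro hmem
            have : y' ∈ (T.filter fun t => ∀ k ∉ F', t k = x k) :=
              Finset.mem_filter.2 ⟨hmem, hy'x⟩
            rw [hemp] at this
            exact absurd this (Finset.notMem_empty y')
          obtain ⟨p1, hp1⟩ := ih F' hF' x y' hy'x hbx hx hy'T
          have hadj : (Q d).Adj y' y := by
            have : y = Function.update y' i (y i) := by
              rw [hy'def, Function.update_idem, Function.update_eq_self]
            rw [this]
            apply adj_update
            rw [hy'def, Function.update_self]
            exact hxyi
          refine ⟨p1.append (SimpleGraph.Walk.cons hadj SimpleGraph.Walk.nil),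
            fun w hw => ?_⟩
          rw [SimpleGraph.Walk.mem_support_append_iff] at hw
          rcases hw with hw | hw
          · exact ⟨(hp1 w hw).1, fun k hk => (hp1 w hw).2 k (hsubF k hk)⟩
          · rw [SimpleGraph.Walk.support_cons, List.mem_cons] at hw
            rcases hw with rfl | hw
            · exact ⟨hy'T, fun k hk => hy'x k (hsubF k hk)⟩
            · rw [SimpleGraph.Walk.support_nil, List.mem_singleton] at hw
              subst hw
              exact ⟨hy, fun k hk => hxy k hk⟩

lemma arith1 (p q d : ℕ) (h : p + q = d) (h1 : 0 < q) : p ≤ d - 1 := by omega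

lemma arith2 (d : ℕ) (h3 : 3 ≤ d) : d - 2 < d - 1 := by omega

lemma arith3 (p d : ℕ) (h : d - 2 < p) (h3 : 3 ≤ d) : d - 1 ≤ p := by omega

lemma arith4 (p q d : ℕ) (h2 : p + q = d) (hp : p = d - 1) (h1 : 0 < q) : q = 1 := by omega

lemma arith5 (d : ℕ) (h3 : 3 ≤ d) : 1 < d - 1 := by omega

lemma bool_not_ne : ∀ c : Bool, (!c) ≠ c := by decide

lemma bool_ne : ∀ a b : Bool, a ≠ b → a = !b := by decide

lemma dim2 : ∀ u v a b : Fin 2 → Bool, hammingDist u v = 1 → u ≠ a → u ≠ b → v ≠ a →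
    v ≠ b → a ≠ b → hammingDist a b = 1 := by
  have : ∀ u v a b : Fin 2 → Bool, ¬(hammingDist u v = 1 ∧ u ≠ a ∧ u ≠ b ∧ v ≠ a ∧
      v ≠ b ∧ a ≠ b ∧ ¬ hammingDist a b = 1) := by decide
  intro u v a b h1 h2 h3 h4 h5 h6
  by_contra h7
  exact this u v a b ⟨h1, h2, h3, h4, h5, h6, h7⟩

theorem stmt_4 (d : ℕ) (S : Finset (Fin d → Bool)) (hcard : S.card = d)
    (a b : Fin d → Bool) (ha : a ∉ S) (hb : b ∉ S)
    (hsep : ∀ p : (Q d).Walk a b, ∃ v ∈ p.support, v ∈ S) :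
    ∀ u ∈ S, ∀ v ∈ S, ¬ (Q d).Adj u v := by
  intro u hu v hv hadj
  have huv : u ≠ v := (Q d).ne_of_adj hadj
  have contra : ∀ p : (Q d).Walk a b, (∀ z ∈ p.support, z ∉ S) → False := by
    intro p hp
    obtain ⟨w, hw1, hw2⟩ := hsep p
    exact hp w hw1 hw2
  by_cases hd3 : 3 ≤ d
  · -- main case
    obtain ⟨i, hui, hveq⟩ := adj_iff hadj
    set F' := (Finset.univ : Finset (Fin d)).erase i with hF'def
    have hF' : F'.card = d - 1 := by
      rw [hF'def, Finset.card_erase_of_mem (Finset.mem_univ i), Finset.card_univ,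
        Fintype.card_fin]
    have hiF' : i ∉ F' := Finset.notMem_erase i _
    have hkeq : ∀ k : Fin d, k ∉ F' → k = i := by
      intro k hk
      by_contra hne
      exact hk (Finset.mem_erase.2 ⟨hne, Finset.mem_univ k⟩)
    have hiff : ∀ w t : Fin d → Bool, (∀ k ∉ F', t k = w k) ↔ t i = w i := by
      intro w t
      constructor
      · intro h; exact h i hiF'
      · intro h k hk; rw [hkeq k hk]; exact h
    have hfilter : ∀ w : Fin d → Bool,
        (S.filter fun t => ∀ k ∉ F', t k = w k) = S.filter (fun t => t i = w i) := by
      intro w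
      exact Finset.filter_congr (fun t _ => hiff w t)
    have hsum : (S.filter (fun t => t i = false)).card
        + (S.filter (fun t => t i = true)).card = d := by
      have h1 := Finset.card_filter_add_card_filter_not
        (s := S) (p := fun t => t i = false)
      have h2 : S.filter (fun t => ¬ t i = false) = S.filter (fun t => t i = true) := by
        apply Finset.filter_congr; intro t _; simp
      rw [h2, hcard] at h1
      exact h1
    have hboth : ∀ c : Bool, (S.filter (fun t => t i = c)).Nonempty := by
      intro c
      rcases eq_or_ne (u i) c with h | h
      · exact ⟨u, Finset.mem_filter.2 ⟨hu, h⟩⟩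
      · have hvc : v i = c := by
          have h1 := bool_ne _ _ h
          have h2 := bool_ne _ _ hui
          rw [h1] at h2
          exact Bool.not_inj h2.symm
        exact ⟨v, Finset.mem_filter.2 ⟨hv, hvc⟩⟩
    have hsum' : ∀ c : Bool, (S.filter (fun t => t i = c)).card
        + (S.filter (fun t => t i = !c)).card = d := by
      intro c
      cases c
      · exact hsum
      · rw [Nat.add_comm]; exact hsum
    have hle : ∀ c : Bool, (S.filter (fun t => t i = c)).card ≤ d - 1 := by
      intro c
      exact arith1 _ _ _ (hsum' c) (Finset.card_pos.2 (hboth (!c)))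
    by_cases hA : ∀ c : Bool, (S.filter (fun t => t i = c)).card ≤ d - 2
    · -- balanced case
      by_cases hab : a i = b i
      · obtain ⟨p, hp⟩ := subcube_conn S (d - 1) F' hF' a b
          (fun k hk => by rw [hkeq k hk]; exact hab.symm)
          (by rw [hfilter a, hF']; exact lt_of_le_of_lt (hA (a i)) (arith2 d hd3))
          ha hb
        exact contra p (fun z hz => (hp z hz).1)
      · -- crossing edge needed
        set U := Finset.univ.filter (fun z : Fin d → Bool => ∀ k ∉ F', z k = a k) with hU
        set B := (S.erase v).image (fun t => Function.update t i (a i)) with hB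
        have hBU : B.card < U.card := by
          rw [hU, card_subcube, hF']
          calc B.card ≤ (S.erase v).card := Finset.card_image_le
          _ = d - 1 := by rw [Finset.card_erase_of_mem hv, hcard]
          _ < 2 ^ (d - 1) := Nat.lt_two_pow_self
        obtain ⟨z, hzU, hzB⟩ := Finset.not_subset.1
          (fun h => absurd (Finset.card_le_card h) (not_le.2 hBU))
        have hza : ∀ k ∉ F', z k = a k := (Finset.mem_filter.1 hzU).2
        have hzi : z i = a i := hza i hiF'
        have hSB : ∀ t ∈ S, Function.update t i (a i) ∈ B := by
          intro t ht
          rcases eq_or_ne t v with heq | hne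
          · rw [hB, Finset.mem_image]
            refine ⟨u, Finset.mem_erase.2 ⟨huv, hu⟩, ?_⟩
            have : Function.update t i (a i) = Function.update u i (a i) := by
              rw [heq, hveq, Function.update_idem]
            exact this.symm
          · rw [hB, Finset.mem_image]
            exact ⟨t, Finset.mem_erase.2 ⟨hne, ht⟩, rfl⟩
        have hzS : z ∉ S := by
          intro hzS
          have := hSB z hzS
          rw [← hzi, Function.update_eq_self] at this
          exact hzB this
        set z' := Function.update z i (b i) with hz'
        have hz'k : ∀ k, k ≠ i → z' k = z k := fun k hk => Function.update_of_ne hk _ _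
        have hz'S : z' ∉ S := by
          intro hz'S
          have := hSB z' hz'S
          rw [hz', Function.update_idem, ← hzi, Function.update_eq_self] at this
          exact hzB this
        have hadj2 : (Q d).Adj z z' :=
          adj_update z i (b i) (by rw [hzi]; exact fun h => hab h.symm)
        obtain ⟨p1, hp1⟩ := subcube_conn S (d - 1) F' hF' a z hza
          (by rw [hfilter a, hF']; exact lt_of_le_of_lt (hA (a i)) (arith2 d hd3))
          ha hzS
        obtain ⟨p2, hp2⟩ := subcube_conn S (d - 1) F' hF' z' b
          (fun k hk => by rw [hkeq k hk, hz', Function.update_self])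
          (by
            rw [show (S.filter fun t => ∀ k ∉ F', t k = z' k)
                = S.filter (fun t => t i = b i) by
              rw [hfilter z']
              apply Finset.filter_congr
              intro t _
              rw [hz', Function.update_self]]
            rw [hF']
            exact lt_of_le_of_lt (hA (b i)) (arith2 d hd3))
          hz'S hb
        apply contra (p1.append (SimpleGraph.Walk.cons hadj2 p2))
        intro w hw
        rw [SimpleGraph.Walk.mem_support_append_iff] at hw
        rcases hw with hw | hw
        · exact (hp1 w hw).1
        · rw [SimpleGraph.Walk.support_cons, List.mem_cons] at hw
          rcases hw with rfl | hw
          · exact hzS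
          · exact (hp2 w hw).1
    · -- unbalanced case: one side is a single vertex
      push_neg at hA
      obtain ⟨c, hc⟩ := hA
      set c' := !c with hc'
      have hcc : (S.filter (fun t => t i = c)).card = d - 1 :=
        le_antisymm (hle c) (arith3 _ _ hc hd3)
      have hc'1 : (S.filter (fun t => t i = c')).card = 1 :=
        arith4 _ _ _ (hsum' c) hcc (Finset.card_pos.2 (hboth c'))
      obtain ⟨w, hw⟩ := Finset.card_eq_one.1 hc'1
      have hwS : w ∈ S := by
        have : w ∈ S.filter (fun t => t i = c') := hw ▸ Finset.mem_singleton_self w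
        exact Finset.mem_of_mem_filter w this
      have hwi : w i = c' := by
        have : w ∈ S.filter (fun t => t i = c') := hw ▸ Finset.mem_singleton_self w
        exact (Finset.mem_filter.1 this).2
      have hmateS : Function.update w i c ∈ S := by
        rcases eq_or_ne (u i) c' with h | h
        · -- u is in the small side, so u = w and mate is v
          have huw : u = w := by
            have : u ∈ S.filter (fun t => t i = c') := Finset.mem_filter.2 ⟨hu, h⟩
            rw [hw] at this
            exact Finset.mem_singleton.1 this
          have hvi : v i = c := by
            have h2 := bool_ne _ _ (Ne.symm hui)
            rw [h, hc'] at h2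
            rw [h2, Bool.not_not]
          rw [← huw, ← hvi, ← hveq]
          exact hv
        · have huc : u i = c := by
            have h1 := bool_ne _ _ h
            rw [hc', Bool.not_not] at h1
            exact h1
          have hvw : v = w := by
            have hvc' : v i = c' := by
              have h2 := bool_ne _ _ hui
              rw [huc] at h2
              have := bool_ne _ _ (Ne.symm hui)
              rw [this, huc]
            have : v ∈ S.filter (fun t => t i = c') := Finset.mem_filter.2 ⟨hv, hvc'⟩
            rw [hw] at this
            exact Finset.mem_singleton.1 this
          have : Function.update w i c = u := by
            rw [← hvw, hveq, Function.update_idem, ← huc, Function.update_eq_self]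
          rw [this]; exact hu
      -- bring x into the small half
      have enter : ∀ x : Fin d → Bool, x ∉ S → ∃ (x' : Fin d → Bool)
          (p : (Q d).Walk x x'), x' i = c' ∧ x' ∉ S ∧ ∀ z ∈ p.support, z ∉ S := by
        intro x hx
        by_cases hxc : x i = c'
        · exact ⟨x, SimpleGraph.Walk.nil, hxc, hx, by simpa using hx⟩
        · have hxci : x i = c := by
            have h1 := bool_ne _ _ hxc
            rw [hc', Bool.not_not] at h1
            exact h1
          set x' := Function.update x i c' with hx'
          have hx'S : x' ∉ S := by
            intro hmem
            have : x' ∈ S.filter (fun t => t i = c') :=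
              Finset.mem_filter.2 ⟨hmem, by rw [hx', Function.update_self]⟩
            rw [hw] at this
            have hx'w : x' = w := Finset.mem_singleton.1 this
            apply hx
            have : x = Function.update w i c := by
              rw [← hx'w, hx', Function.update_idem, ← hxci, Function.update_eq_self]
            rw [this]
            exact hmateS
          refine ⟨x', SimpleGraph.Walk.cons
            (adj_update x i c' (by rw [hxci, hc']; exact bool_not_ne _)) SimpleGraph.Walk.nil,
            by rw [hx', Function.update_self], hx'S, ?_⟩
          intro z hz
          rw [SimpleGraph.Walk.support_cons, List.mem_cons] at hz
          rcases hz with rfl | hz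
          · exact hx
          · rw [SimpleGraph.Walk.support_nil, List.mem_singleton] at hz
            subst hz
            exact hx'S
      obtain ⟨a', pa, ha'i, ha'S, hpa⟩ := enter a ha
      obtain ⟨b', pb, hb'i, hb'S, hpb⟩ := enter b hb
      obtain ⟨pm, hpm⟩ := subcube_conn S (d - 1) F' hF' a' b'
        (fun k hk => by rw [hkeq k hk, ha'i, hb'i])
        (by
          rw [hfilter a']
          rw [show (S.filter fun t => t i = a' i) = S.filter (fun t => t i = c') by
            rw [ha'i]]
          rw [hc'1, hF']
          exact arith5 d hd3)
        ha'S hb'S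
      apply contra (pa.append (pm.append pb.reverse))
      intro z hz
      rw [SimpleGraph.Walk.mem_support_append_iff] at hz
      rcases hz with hz | hz
      · exact hpa z hz
      · rw [SimpleGraph.Walk.mem_support_append_iff] at hz
        rcases hz with hz | hz
        · exact (hpm z hz).1
        · rw [SimpleGraph.Walk.support_reverse, List.mem_reverse] at hz
          exact hpb z hz
  · -- small dimensions
    interval_cases d
    · simp at hcard
      subst hcard
      simp at hu
    · have : 2 ≤ S.card := Finset.one_lt_card.2 ⟨u, hu, v, hv, huv⟩
      omega
    · have hSuv : S = {u, v} := by
        refine (Finset.eq_of_subset_of_card_le ?_ ?_).symm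
        · intro t ht
          rw [Finset.mem_insert, Finset.mem_singleton] at ht
          rcases ht with rfl | rfl
          · exact hu
          · exact hv
        · rw [hcard, Finset.card_insert_of_notMem (by simpa using huv),
            Finset.card_singleton]
      by_cases hab : a = b
      · subst hab
        exact contra SimpleGraph.Walk.nil (by simpa using ha)
      · have hadj' : (Q 2).Adj a b :=
          dim2 u v a b hadj (fun h => ha (h ▸ hu)) (fun h => hb (h ▸ hu))
            (fun h => ha (h ▸ hv)) (fun h => hb (h ▸ hv)) hab
        apply contra (SimpleGraph.Walk.cons hadj' SimpleGraph.Walk.nil)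
        intro z hz
        rw [SimpleGraph.Walk.support_cons, List.mem_cons] at hz
        rcases hz with rfl | hz
        · exact ha
        · rw [SimpleGraph.Walk.support_nil, List.mem_singleton] at hz
          subst hz
          exact hb
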